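/- Let p, q be nonzero polynomials over ℂ with deg p = d and deg q = e, where d ≠ e and d ≠ e + 1. Define N(z) = z − (p(z)·q(z))/(p'(z)·q(z) − p(z)·q'(z)). Then z/N(z) tends to (d−e)/(d−e−1) as |z| → ∞ (i.e., along the cobounded filter on ℂ). -/

import Mathlib

open Polynomial Filter Topology

lemma newton_aux_compl_mem (s : Set ℂ) (hs : s.Finite) : sᶜ ∈ Bornology.cobounded ℂ :=
  Bornology.isBounded_def.mp hs.isBounded

lemma newton_aux_tendsto_eval_div_pow (R : ℂ[X]) (n : ℕ) (hn : R.natDegree ≤ n) :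
    Tendsto (fun z : ℂ => R.eval z / z ^ n) (Bornology.cobounded ℂ) (𝓝 (R.coeff n)) := by
  have hinv : Tendsto (fun z : ℂ => z⁻¹) (Bornology.cobounded ℂ) (𝓝 0) :=
    tendsto_inv₀_cobounded
  have key : Tendsto (fun z : ℂ => ∑ i ∈ Finset.range (n + 1), R.coeff i * (z⁻¹) ^ (n - i))
      (Bornology.cobounded ℂ) (𝓝 (R.coeff n)) := by
    have : Tendsto (fun z : ℂ => ∑ i ∈ Finset.range (n + 1), R.coeff i * (z⁻¹) ^ (n - i))
        (Bornology.cobounded ℂ)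
        (𝓝 (∑ i ∈ Finset.range (n + 1), if i = n then R.coeff n else 0)) := by
      apply tendsto_finset_sum
      intro i hi
      rcases eq_or_ne i n with rfl | hne
      · simp only [if_pos rfl, Nat.sub_self, pow_zero, mul_one]
        exact tendsto_const_nhds
      · have hlt : i < n := lt_of_le_of_ne (Nat.lt_succ_iff.mp (Finset.mem_range.mp hi)) hne
        simp only [if_neg hne]
        have h2 : Tendsto (fun z : ℂ => (z⁻¹) ^ (n - i)) (Bornology.cobounded ℂ) (𝓝 0) := by
          simpa [zero_pow (Nat.sub_ne_zero_of_lt hlt)] using hinv.pow (n - i)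
        simpa using h2.const_mul (R.coeff i)
    simpa [Finset.sum_ite_eq' (Finset.range (n+1)) n] using this
  refine key.congr' ?_
  filter_upwards [newton_aux_compl_mem {0} (Set.finite_singleton 0)] with z hz
  have hz0 : z ≠ 0 := by simpa using hz
  rw [eval_eq_sum_range' (Nat.lt_succ_of_le hn), Finset.sum_div]
  refine Finset.sum_congr rfl fun i hi => ?_
  have hile : i ≤ n := Nat.lt_succ_iff.mp (Finset.mem_range.mp hi)
  rw [mul_div_assoc]
  congr 1
  have hzz : z ^ n = z ^ i * z ^ (n - i) := by
    rw [← pow_add, Nat.add_sub_cancel' hile]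
  rw [inv_pow, hzz]
  field_simp

lemma newton_aux_coeff_deriv_mul (p q : ℂ[X]) (d e : ℕ) (hd : p.natDegree = d)
    (he : q.natDegree = e) (hpos : 0 < d + e) :
    (p.derivative * q).coeff (d + e - 1) = (d : ℂ) * p.coeff d * q.coeff e := by
  rcases Nat.eq_zero_or_pos d with h0 | hdpos
  · subst h0
    obtain ⟨c, rfl⟩ := natDegree_eq_zero.mp hd
    simp
  · have hidx : d + e - 1 = (d - 1) + e := by omega
    have hle : p.derivative.natDegree ≤ d - 1 := (natDegree_derivative_le p).trans (by omega)
    rw [hidx, coeff_mul_add_eq_of_natDegree_le hle he.le, coeff_derivative]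
    have h1 : d - 1 + 1 = d := by omega
    rw [h1]
    push_cast [Nat.cast_sub hdpos]
    ring

lemma newton_aux_natDegree_deriv_mul (p q : ℂ[X]) (d e : ℕ) (hd : p.natDegree = d)
    (he : q.natDegree = e) (hpos : 0 < d + e) :
    (p.derivative * q).natDegree ≤ d + e - 1 := by
  by_cases hp' : p.derivative = 0
  · simp [hp']
  · have hd1 : 1 ≤ d := by
      rcases Nat.eq_zero_or_pos d with h0 | h
      · exfalso
        obtain ⟨c, rfl⟩ := natDegree_eq_zero.mp (h0 ▸ hd)
        simp at hp'
      · exact h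
    refine natDegree_mul_le.trans ?_
    have := natDegree_derivative_le p
    omega

theorem newton_infinity_multiplier
    (p q : ℂ[X]) (hp : p ≠ 0) (hq : q ≠ 0) (d e : ℕ)
    (hd : p.natDegree = d) (he : q.natDegree = e) (hde : d ≠ e) (hde1 : d ≠ e + 1)
    (N : ℂ → ℂ)
    (hN : ∀ z, N z = z - (p.eval z * q.eval z) /
      (p.derivative.eval z * q.eval z - p.eval z * q.derivative.eval z)) :
    Tendsto (fun z => z / N z) (Bornology.cobounded ℂ)
      (𝓝 (((d : ℂ) - (e : ℂ)) / ((d : ℂ) - (e : ℂ) - 1))) := by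
  set D : ℂ[X] := p.derivative * q - p * q.derivative with hD
  have hpos : 0 < d + e := by omega
  have ha : p.coeff d ≠ 0 := by rw [← hd]; exact mt leadingCoeff_eq_zero.mp hp
  have hb : q.coeff e ≠ 0 := by rw [← he]; exact mt leadingCoeff_eq_zero.mp hq
  have hde' : (d : ℂ) - (e : ℂ) ≠ 0 := by
    rw [sub_ne_zero]
    exact_mod_cast hde
  have hde1' : (d : ℂ) - (e : ℂ) - 1 ≠ 0 := by
    intro h
    apply hde1
    have : (d : ℂ) = (e : ℂ) + 1 := by linear_combination h
    exact_mod_cast this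
  -- coefficient of D
  have hDcoeff : D.coeff (d + e - 1) = ((d : ℂ) - (e : ℂ)) * (p.coeff d * q.coeff e) := by
    rw [hD, coeff_sub, newton_aux_coeff_deriv_mul p q d e hd he hpos]
    have : (p * q.derivative).coeff (d + e - 1) = (e : ℂ) * q.coeff e * p.coeff d := by
      rw [mul_comm p q.derivative]
      have h := newton_aux_coeff_deriv_mul q p e d he hd (by omega)
      rwa [show e + d - 1 = d + e - 1 by omega] at h
    rw [this]
    ring
  have hDdeg : D.natDegree ≤ d + e - 1 := by
    refine (natDegree_sub_le _ _).trans (max_le ?_ ?_)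
    · exact newton_aux_natDegree_deriv_mul p q d e hd he hpos
    · rw [mul_comm p q.derivative]
      have h := newton_aux_natDegree_deriv_mul q p e d he hd (by omega)
      rwa [show e + d - 1 = d + e - 1 by omega] at h
  have hDne : D ≠ 0 := by
    intro h
    rw [h, coeff_zero] at hDcoeff
    exact (mul_ne_zero hde' (mul_ne_zero ha hb)) hDcoeff.symm
  -- the two basic limits
  have hF : Tendsto (fun z : ℂ => (p * q).eval z / z ^ (d + e)) (Bornology.cobounded ℂ)
      (𝓝 (p.coeff d * q.coeff e)) := by
    have h := newton_aux_tendsto_eval_div_pow (p * q) (d + e)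
      (natDegree_mul_le.trans (by omega))
    have hc : (p * q).coeff (d + e) = p.coeff d * q.coeff e :=
      coeff_mul_add_eq_of_natDegree_le hd.le he.le
    rwa [hc] at h
  have hG : Tendsto (fun z : ℂ => D.eval z / z ^ (d + e - 1)) (Bornology.cobounded ℂ)
      (𝓝 (((d : ℂ) - (e : ℂ)) * (p.coeff d * q.coeff e))) := by
    have h := newton_aux_tendsto_eval_div_pow D (d + e - 1) hDdeg
    rwa [hDcoeff] at h
  have hc2ne : ((d : ℂ) - (e : ℂ)) * (p.coeff d * q.coeff e) ≠ 0 :=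
    mul_ne_zero hde' (mul_ne_zero ha hb)
  have hFG := hF.div hG hc2ne
  have hval : p.coeff d * q.coeff e / (((d : ℂ) - (e : ℂ)) * (p.coeff d * q.coeff e))
      = ((d : ℂ) - (e : ℂ))⁻¹ := by
    rw [mul_comm ((d : ℂ) - (e : ℂ)), ← div_div, div_self (mul_ne_zero ha hb), one_div]
  have hne3 : (1 : ℂ) - ((d : ℂ) - (e : ℂ))⁻¹ ≠ 0 := by
    intro h
    apply hde1'
    have h1 : ((d : ℂ) - (e : ℂ))⁻¹ = 1 := by linear_combination -h
    have h2 : (d : ℂ) - (e : ℂ) = 1 := by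
      have h3 := congrArg (·⁻¹) h1
      simpa using h3
    linear_combination h2
  have hfinal : ((1 : ℂ) - ((d : ℂ) - (e : ℂ))⁻¹)⁻¹
      = ((d : ℂ) - (e : ℂ)) / ((d : ℂ) - (e : ℂ) - 1) := by
    rw [inv_eq_iff_eq_inv, div_eq_mul_inv, mul_inv, inv_inv]
    field_simp
  have hmain : Tendsto (fun z : ℂ =>
      (1 - ((p * q).eval z / z ^ (d + e)) / (D.eval z / z ^ (d + e - 1)))⁻¹)
      (Bornology.cobounded ℂ)
      (𝓝 (((d : ℂ) - (e : ℂ)) / ((d : ℂ) - (e : ℂ) - 1))) := by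
    rw [← hfinal, ← hval]
    exact (hFG.const_sub 1).inv₀ (by rw [hval]; exact hne3)
  refine hmain.congr' ?_
  filter_upwards [newton_aux_compl_mem ({z | D.eval z = 0} ∪ {0})
    ((D.finite_setOf_isRoot hDne).union (Set.finite_singleton 0))] with z hz
  simp only [Set.mem_compl_iff, Set.mem_union, Set.mem_setOf_eq, Set.mem_singleton_iff,
    not_or] at hz
  obtain ⟨hDz, hz0⟩ := hz
  have hDzval : D.eval z = p.derivative.eval z * q.eval z - p.eval z * q.derivative.eval z := by
    simp [hD]
  set P := p.eval z * q.eval z with hP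
  set Dv := D.eval z with hDv
  have hPQ : (p * q).eval z = P := by simp [hP]
  have hmm : d + e = (d + e - 1) + 1 := by omega
  have hpow : z ^ (d + e) = z ^ (d + e - 1) * z := by
    conv_lhs => rw [hmm]
    rw [pow_succ]
  have hinner : (P / z ^ (d + e)) / (Dv / z ^ (d + e - 1)) = P / (z * Dv) := by
    rw [hpow]
    rw [div_div_div_comm]
    rw [show z ^ (d + e - 1) * z / z ^ (d + e - 1) = z by
      rw [mul_comm, mul_div_assoc, div_self (pow_ne_zero _ hz0), mul_one]]
    rw [div_div, mul_comm Dv z]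
  rw [hPQ, hinner, hN z, ← hDzval, ← hP]
  have h1 : z - P / Dv = (z * Dv - P) / Dv := by field_simp
  have h2 : 1 - P / (z * Dv) = (z * Dv - P) / (z * Dv) := by
    field_simp
  rw [h1, h2, inv_div, div_div_eq_mul_div]
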